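/- (Contractive projection property of group hard-thresholding.) Let X, X* ∈ ℝ^{N×N×T₀} be tensors with frontal slices (X_j) and (X*_j). Let S₁ = {j : X_j ≠ 0} and S₂ = {j : X*_j ≠ 0} with cardinalities s₁ and s₂. Let HT(X, s) denote the tensor keeping the s frontal slices of X with largest Frobenius norms and setting the others to zero. If s₂ < s ≤ s₁ and S₂ ⊆ S₁, then ‖HT(X,s) − X‖_F² ≤ ((s₁ − s)/(s₁ − s₂)) · ‖X − X*‖_F². -/

import Mathlib

/-- Frobenius norm of a real matrix. -/
noncomputable def frob {m n : Type*} [Fintype m] [Fintype n] (M : Matrix m n ℝ) : ℝ :=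
  Real.sqrt (∑ i, ∑ j, (M i j) ^ 2)

lemma frob_nonneg {m n : Type*} [Fintype m] [Fintype n] (M : Matrix m n ℝ) : 0 ≤ frob M :=
  Real.sqrt_nonneg _

lemma frob_sq {m n : Type*} [Fintype m] [Fintype n] (M : Matrix m n ℝ) :
    frob M ^ 2 = ∑ i, ∑ j, (M i j) ^ 2 := by
  apply Real.sq_sqrt
  apply Finset.sum_nonneg
  intro i _
  exact Finset.sum_nonneg fun j _ => sq_nonneg _

lemma frob_zero {m n : Type*} [Fintype m] [Fintype n] :
    frob (0 : Matrix m n ℝ) = 0 := by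
  simp [frob]

/-- Key averaging lemma: if every element of `D` is bounded by every element of `S`,
`D` and `S` are disjoint, and `A ⊆ D ∪ S` with `|D| ≤ |A|`, then
`|A| * ∑_D f ≤ |D| * ∑_A f` for nonnegative `f`. -/
lemma key_avg {ι : Type*} [DecidableEq ι] (D S A : Finset ι) (f : ι → ℝ)
    (hf : ∀ i, 0 ≤ f i) (hAsub : A ⊆ D ∪ S)
    (hle : ∀ j ∈ D, ∀ k ∈ S, f j ≤ f k)
    (hmn : D.card ≤ A.card) :
    (A.card : ℝ) * ∑ j ∈ D, f j ≤ (D.card : ℝ) * ∑ j ∈ A, f j := by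
  rcases D.eq_empty_or_nonempty with hD | hD
  · subst hD; simp
  obtain ⟨j₀, hj₀D, hj₀max⟩ := D.exists_max_image f hD
  set M := f j₀ with hM
  -- split sums
  have hsumD : ∑ j ∈ D ∩ A, f j + ∑ j ∈ D \ A, f j = ∑ j ∈ D, f j :=
    Finset.sum_inter_add_sum_sdiff D A f
  have hsumA : ∑ j ∈ A ∩ D, f j + ∑ j ∈ A \ D, f j = ∑ j ∈ A, f j :=
    Finset.sum_inter_add_sum_sdiff A D f
  have hcardD : (D \ A).card + (D ∩ A).card = D.card :=
    Finset.card_sdiff_add_card_inter D A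
  have hcardA : (A \ D).card + (A ∩ D).card = A.card :=
    Finset.card_sdiff_add_card_inter A D
  have hPM : ∑ j ∈ A ∩ D, f j ≤ ((A ∩ D).card : ℝ) * M := by
    rw [← nsmul_eq_mul]
    apply Finset.sum_le_card_nsmul
    intro x hx
    exact hj₀max x (Finset.mem_of_mem_inter_right hx)
  have hQM : ∑ j ∈ D \ A, f j ≤ ((D \ A).card : ℝ) * M := by
    rw [← nsmul_eq_mul]
    apply Finset.sum_le_card_nsmul
    intro x hx
    exact hj₀max x (Finset.mem_sdiff.mp hx).1
  have hRM : ((A \ D).card : ℝ) * M ≤ ∑ j ∈ A \ D, f j := by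
    rw [← nsmul_eq_mul]
    apply Finset.card_nsmul_le_sum
    intro x hx
    have hxS : x ∈ S := by
      rcases Finset.mem_union.mp (hAsub (Finset.mem_sdiff.mp hx).1) with h | h
      · exact absurd h (Finset.mem_sdiff.mp hx).2
      · exact h
    exact hle j₀ hj₀D x hxS
  have hinter : ∑ j ∈ D ∩ A, f j = ∑ j ∈ A ∩ D, f j := by
    rw [Finset.inter_comm]
  have hMnn : 0 ≤ M := hf j₀
  have hPnn : 0 ≤ ∑ j ∈ A ∩ D, f j := Finset.sum_nonneg fun i _ => hf i
  -- cards as reals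
  have hcDA : ((A ∩ D).card : ℝ) ≤ (D.card : ℝ) := by
    exact_mod_cast Finset.card_le_card (Finset.inter_subset_right)
  have hcD : ((D \ A).card : ℝ) + ((A ∩ D).card : ℝ) = (D.card : ℝ) := by
    rw [Finset.inter_comm]; exact_mod_cast hcardD
  have hcA : ((A \ D).card : ℝ) + ((A ∩ D).card : ℝ) = (A.card : ℝ) := by
    exact_mod_cast hcardA
  have hmn' : (D.card : ℝ) ≤ (A.card : ℝ) := by exact_mod_cast hmn
  have c1 : (0:ℝ) ≤ (A.card : ℝ) := Nat.cast_nonneg _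
  have c2 : (0:ℝ) ≤ (D.card : ℝ) := Nat.cast_nonneg _
  have h1 : ∑ j ∈ D, f j ≤ ∑ j ∈ A ∩ D, f j + ((D \ A).card : ℝ) * M := by
    rw [← hsumD, hinter]; linarith
  have h2 : ∑ j ∈ A ∩ D, f j + ((A \ D).card : ℝ) * M ≤ ∑ j ∈ A, f j := by
    rw [← hsumA]; linarith
  have e1 : ((D \ A).card : ℝ) * M = ((D.card : ℝ) - ((A ∩ D).card : ℝ)) * M := by
    rw [← hcD]; ring
  have e2 : ((A \ D).card : ℝ) * M = ((A.card : ℝ) - ((A ∩ D).card : ℝ)) * M := by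
    rw [← hcA]; ring
  have k1 := mul_le_mul_of_nonneg_left h1 c1
  have k2 := mul_le_mul_of_nonneg_left h2 c2
  rw [e1] at k1
  rw [e2] at k2
  nlinarith [mul_nonneg (sub_nonneg.mpr hmn')
      (sub_nonneg.mpr hPM)]

/-- Contractive projection property of group hard-thresholding: if `Y = HT(X, s)` keeps
`s` frontal slices of largest Frobenius norm (indexed by a set `S`, ties broken
arbitrarily), `X` has `s₁` nonzero slices, `X*` has `s₂ < s ≤ s₁` nonzero slices, and
the support of `X*` is contained in that of `X`, then
`‖HT(X,s) − X‖_F² ≤ ((s₁ − s)/(s₁ − s₂)) ‖X − X*‖_F²`. -/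
theorem hard_threshold_contractive {N T₀ : ℕ}
    (X Xstar Y : Fin T₀ → Matrix (Fin N) (Fin N) ℝ) (s : ℕ) (S : Finset (Fin T₀))
    (hScard : S.card = s)
    (hSmax : ∀ j ∈ S, ∀ k ∉ S, frob (X k) ≤ frob (X j))
    (hY : ∀ j, Y j = if j ∈ S then X j else 0)
    (hs2 : (Finset.univ.filter (fun j => Xstar j ≠ 0)).card < s)
    (hs1 : s ≤ (Finset.univ.filter (fun j => X j ≠ 0)).card)
    (hsub : Finset.univ.filter (fun j => Xstar j ≠ 0) ⊆
      Finset.univ.filter (fun j => X j ≠ 0)) :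
    ∑ j, (frob (Y j - X j)) ^ 2 ≤
      (((Finset.univ.filter (fun j => X j ≠ 0)).card : ℝ) - s) /
        (((Finset.univ.filter (fun j => X j ≠ 0)).card : ℝ) -
          ((Finset.univ.filter (fun j => Xstar j ≠ 0)).card : ℝ)) *
      ∑ j, (frob (X j - Xstar j)) ^ 2 := by
  classical
  set S₁ := Finset.univ.filter (fun j => X j ≠ 0) with hS₁
  set S₂ := Finset.univ.filter (fun j => Xstar j ≠ 0) with hS₂
  set s₁ := S₁.card
  set s₂ := S₂.card
  have hs₂₁ : s₂ < s₁ := lt_of_lt_of_le hs2 hs1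
  have hden_pos : (0:ℝ) < (s₁:ℝ) - (s₂:ℝ) := by
    have : (s₂:ℝ) < (s₁:ℝ) := by exact_mod_cast hs₂₁
    linarith
  have hratio_nn : (0:ℝ) ≤ ((s₁:ℝ) - s) / ((s₁:ℝ) - (s₂:ℝ)) := by
    apply div_nonneg _ (le_of_lt hden_pos)
    have : (s:ℝ) ≤ (s₁:ℝ) := by exact_mod_cast hs1
    linarith
  have hT_nn : 0 ≤ ∑ j, (frob (X j - Xstar j)) ^ 2 :=
    Finset.sum_nonneg fun j _ => sq_nonneg _
  -- compute LHS terms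
  have hterm : ∀ j, (frob (Y j - X j)) ^ 2 = if j ∈ S then 0 else (frob (X j)) ^ 2 := by
    intro j
    by_cases hj : j ∈ S
    · simp [hY j, hj, frob_zero]
    · simp only [hY j, hj, if_false]
      rw [frob_sq, frob_sq]
      congr 1; ext i; congr 1; ext k
      simp [Matrix.sub_apply]
  by_cases hcase : ∀ k ∈ S, X k ≠ 0
  · -- main case: S ⊆ S₁
    have hSsub : S ⊆ S₁ := by
      intro k hk
      simp only [hS₁, Finset.mem_filter, Finset.mem_univ, true_and]
      exact hcase k hk
    set D := S₁ \ S with hD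
    set A := S₁ \ S₂ with hA
    have hLHS : ∑ j, (frob (Y j - X j)) ^ 2 = ∑ j ∈ D, (frob (X j)) ^ 2 := by
      rw [Finset.sum_congr rfl (fun j _ => hterm j)]
      rw [Finset.sum_ite, Finset.sum_const_zero, zero_add]
      apply (Finset.sum_subset _ _).symm
      · intro j hj
        simp only [hD, Finset.mem_sdiff] at hj
        simp [hj.2]
      · intro j hj hjD
        have hjS : j ∉ S := by
          simp only [Finset.mem_filter] at hj
          exact hj.2
        have : j ∉ S₁ := by
          simp only [hD, Finset.mem_sdiff] at hjD
          tauto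
        have hX0 : X j = 0 := by
          by_contra h
          exact this (by simp [hS₁, h])
        simp [hX0, frob_zero]
    rw [hLHS]
    -- lower bound RHS sum by sum over A
    have hAsum : ∑ j ∈ A, (frob (X j)) ^ 2 ≤ ∑ j, (frob (X j - Xstar j)) ^ 2 := by
      have h1 : ∑ j ∈ A, (frob (X j)) ^ 2 = ∑ j ∈ A, (frob (X j - Xstar j)) ^ 2 := by
        apply Finset.sum_congr rfl
        intro j hj
        have : Xstar j = 0 := by
          simp only [hA, Finset.mem_sdiff, hS₂, Finset.mem_filter, Finset.mem_univ,
            true_and] at hj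
          by_contra h
          exact hj.2 h
        rw [this, sub_zero]
      rw [h1]
      apply Finset.sum_le_sum_of_subset_of_nonneg (Finset.subset_univ A)
      intro j _ _
      exact sq_nonneg _
    -- cards
    have hcD : (D.card : ℝ) = (s₁:ℝ) - s := by
      rw [hD, Finset.card_sdiff_of_subset hSsub, hScard]
      have : s ≤ s₁ := hs1
      change ((s₁ - s : ℕ) : ℝ) = _
      push_cast [Nat.cast_sub this]
      ring
    have hcA : (A.card : ℝ) = (s₁:ℝ) - s₂ := by
      rw [hA, Finset.card_sdiff_of_subset hsub]
      have : s₂ ≤ s₁ := le_of_lt hs₂₁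
      change ((s₁ - s₂ : ℕ) : ℝ) = _
      push_cast [Nat.cast_sub this]
      ring
    have hkey := key_avg D S A (fun j => (frob (X j)) ^ 2)
      (fun i => sq_nonneg _)
      (by
        intro j hj
        simp only [hA, hD, Finset.mem_sdiff, Finset.mem_union] at hj ⊢
        by_cases h : j ∈ S
        · right; exact h
        · left; exact ⟨hj.1, h⟩)
      (by
        intro j hj k hk
        have hjS : j ∉ S := (Finset.mem_sdiff.mp hj).2
        have := hSmax k hk j hjS
        exact pow_le_pow_left₀ (frob_nonneg _) this 2)
      (by
        have : (D.card : ℝ) ≤ (A.card : ℝ) := by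
          rw [hcD, hcA]
          have : (s₂:ℝ) < (s:ℝ) := by exact_mod_cast hs2
          linarith
        exact_mod_cast this)
    -- conclude
    rw [div_mul_eq_mul_div, le_div_iff₀ hden_pos]
    have hs1r : (s:ℝ) ≤ (s₁:ℝ) := by exact_mod_cast hs1
    have h2 : ((s₁:ℝ) - s) * ∑ j ∈ A, (frob (X j)) ^ 2 ≤
        ((s₁:ℝ) - s) * ∑ j, (frob (X j - Xstar j)) ^ 2 := by
      apply mul_le_mul_of_nonneg_left hAsum
      linarith
    have hkey' : ((s₁:ℝ) - s₂) * ∑ j ∈ D, (frob (X j)) ^ 2 ≤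
        ((s₁:ℝ) - s) * ∑ j ∈ A, (frob (X j)) ^ 2 := by
      rw [← hcD, ← hcA]
      simpa using hkey
    linarith
  · -- degenerate case: some kept slice is zero, so all dropped slices are zero
    push_neg at hcase
    obtain ⟨k, hkS, hk0⟩ := hcase
    have hLHS : ∑ j, (frob (Y j - X j)) ^ 2 = 0 := by
      apply Finset.sum_eq_zero
      intro j _
      rw [hterm j]
      by_cases hj : j ∈ S
      · simp [hj]
      · simp only [hj, if_false]
        have h1 : frob (X j) ≤ frob (X k) := hSmax k hkS j hj
        rw [hk0, frob_zero] at h1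
        have h2 : frob (X j) = 0 := le_antisymm h1 (frob_nonneg _)
        rw [h2]; ring
    rw [hLHS]
    exact mul_nonneg hratio_nn hT_nn
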